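/- arXiv:2506.21327 — 2 statements merged into one kernel-verified Lean document; each statement's English description precedes it below -/
import Mathlib

section
/- Let B be a finite block tree with height function h and confirmation depth d_c, let c* ≥ 1 be a natural number, and let h_max be a natural number. Suppose b' and b are distinct blocks with h(b') = h(b), every tip that is a descendant of b' has height strictly less than h_max + c*, and b has a descendant (tip or not) of height at least h_max. Then d_c(b') − d_c(b) < c*; in particular, b' is not c*-stable with respect to d_c. (This is the combinatorial core of the paper's Lemma that the probability of a state corruption for Bitcoin services requiring c* confirmations is negligible: a fork whose height exceeds the real blockchain's height by less than c* can never make one of its blocks appear c*-confirmed.) -/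
/-- A finite block tree: a finite set of blocks with a distinguished genesis
block `g` and a parent map `p` (extended to be total by setting `p g = g`)
such that iterating `p` from any block eventually reaches `g`. -/
structure BlockTree (B : Type*) [Fintype B] [DecidableEq B] where
  g : B
  p : B → B
  root : p g = g
  reach : ∀ b : B, ∃ k : ℕ, p^[k] b = g

namespace BlockTree

variable {B : Type*} [Fintype B] [DecidableEq B] (T : BlockTree B)

/-- The successors of a block `b`: the blocks (other than genesis) whose parent is `b`. -/
def succ (b : B) : Finset B := Finset.univ.filter fun b' => b' ≠ T.g ∧ T.p b' = b

/-- A block is a tip if it has no successors. -/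
def IsTip (b : B) : Prop := T.succ b = ∅

/-- `h` is the height function: the number of iterations of the parent map
needed to reach the genesis block. -/
def IsHeight (h : B → ℕ) : Prop :=
  h T.g = 0 ∧ ∀ b : B, b ≠ T.g → h b = h (T.p b) + 1

/-- `d` is the depth function associated with the cost function `c`:
`d b = c b` if `b` is a tip, and `d b = c b + max_{b' ∈ succ b} d b'` otherwise. -/
def IsDepth (c : B → ℝ) (d : B → ℝ) : Prop :=
  ∀ b : B, (T.succ b = ∅ → d b = c b) ∧
    ∀ hne : (T.succ b).Nonempty, d b = c b + (T.succ b).sup' hne d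

/-- `b''` is a descendant of `b` if iterating the parent map from `b''` reaches
`b` in zero or more steps. -/
def Descendant (b'' b : B) : Prop := ∃ k : ℕ, (T.p)^[k] b'' = b

/-- A block `b` is `δ`-stable with respect to the depth function `d` and the
height function `h` if `d b ≥ δ` and `d b - d b' ≥ δ` for every block `b' ≠ b`
at the same height. -/
def Stable (_T : BlockTree B) (d : B → ℝ) (h : B → ℕ) (δ : ℝ) (b : B) : Prop :=
  d b ≥ δ ∧ ∀ b' : B, b' ≠ b → h b' = h b → d b - d b' ≥ δ

end BlockTree

section Aux

variable {B : Type*} [Fintype B] [DecidableEq B] (T : BlockTree B)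
variable {h : B → ℕ} {dc : B → ℝ}

lemma ne_g_of_height_pos (hh : T.IsHeight h) {x : B} (hx : 0 < h x) : x ≠ T.g := by
  intro e; rw [e, hh.1] at hx; exact absurd hx (lt_irrefl 0)

lemma mem_succ_of_ne_g {x : B} (hx : x ≠ T.g) : x ∈ T.succ (T.p x) := by
  simp [BlockTree.succ, hx]

lemma succ_mem {b₁ b : B} (hb : b₁ ∈ T.succ b) : b₁ ≠ T.g ∧ T.p b₁ = b := by
  simpa [BlockTree.succ] using hb

lemma height_succ (hh : T.IsHeight h) {b₁ b : B} (hb : b₁ ∈ T.succ b) : h b₁ = h b + 1 := by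
  obtain ⟨h1, h2⟩ := succ_mem T hb
  rw [hh.2 b₁ h1, h2]

lemma iter_height (hh : T.IsHeight h) : ∀ i (x : B), i ≤ h x → h (T.p^[i] x) = h x - i := by
  intro i
  induction i with
  | zero => simp
  | succ n ih =>
    intro x hx
    rw [Function.iterate_succ_apply']
    have hn : n ≤ h x := Nat.le_of_succ_le hx
    have h1 : h (T.p^[n] x) = h x - n := ih x hn
    have hpos : 0 < h (T.p^[n] x) := by omega
    have hne := ne_g_of_height_pos T hh hpos
    have := hh.2 _ hne
    omega

lemma height_lt_card (hh : T.IsHeight h) (b : B) : h b < Fintype.card B := by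
  have hinj : Function.Injective (fun i : Fin (h b + 1) => T.p^[(i : ℕ)] b) := by
    intro i j hij
    have hi : h (T.p^[(i:ℕ)] b) = h b - i := iter_height T hh i b (Nat.lt_succ_iff.mp i.2)
    have hj : h (T.p^[(j:ℕ)] b) = h b - j := iter_height T hh j b (Nat.lt_succ_iff.mp j.2)
    have hij' : h (T.p^[(i:ℕ)] b) = h (T.p^[(j:ℕ)] b) := congrArg h hij
    have : h b - (i:ℕ) = h b - (j:ℕ) := by rw [← hi, ← hj, hij']
    have hi2 := Nat.lt_succ_iff.mp i.2
    have hj2 := Nat.lt_succ_iff.mp j.2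
    exact Fin.ext (by omega)
  have := Fintype.card_le_of_injective _ hinj
  simpa using this

lemma one_le_dc (hh : T.IsHeight h) (hd : T.IsDepth (fun _ => 1) dc) : ∀ b : B, 1 ≤ dc b := by
  have key : ∀ n (b : B), Fintype.card B - h b ≤ n → 1 ≤ dc b := by
    intro n
    induction n with
    | zero => intro b hb; exact absurd (height_lt_card T hh b) (by omega)
    | succ n ih =>
      intro b hb
      by_cases ht : T.succ b = ∅
      · rw [(hd b).1 ht]
      · have hne : (T.succ b).Nonempty := Finset.nonempty_iff_ne_empty.mpr ht
        obtain ⟨b₁, hb₁⟩ := hne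
        have hh1 : h b₁ = h b + 1 := height_succ T hh hb₁
        have h1 : 1 ≤ dc b₁ := ih b₁ (by have := height_lt_card T hh b; omega)
        have h2 : dc b₁ ≤ (T.succ b).sup' ⟨b₁, hb₁⟩ dc := Finset.le_sup' dc hb₁
        rw [(hd b).2 ⟨b₁, hb₁⟩]
        simp only
        linarith
  intro b; exact key (Fintype.card B - h b) b le_rfl

lemma dc_parent_step (hh : T.IsHeight h) (hd : T.IsDepth (fun _ => 1) dc) (x : B) : dc x + ((h x : ℝ) - h (T.p x)) ≤ dc (T.p x) := by
  by_cases hx : x = T.g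
  · rw [hx, T.root]; simp
  · have hmem := mem_succ_of_ne_g T hx
    have hne : (T.succ (T.p x)).Nonempty := ⟨x, hmem⟩
    have h2 : dc x ≤ (T.succ (T.p x)).sup' hne dc := Finset.le_sup' dc hmem
    rw [(hd (T.p x)).2 hne]
    have hx2 : h x = h (T.p x) + 1 := hh.2 x hx
    rw [hx2]
    push_cast
    linarith

lemma dc_descendant (hh : T.IsHeight h) (hd : T.IsDepth (fun _ => 1) dc) : ∀ k (x : B), dc x + (h x : ℝ) ≤ dc (T.p^[k] x) + (h (T.p^[k] x) : ℝ) := by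
  intro k
  induction k with
  | zero => simp
  | succ n ih =>
    intro x
    rw [Function.iterate_succ_apply]
    calc dc x + (h x : ℝ) ≤ dc (T.p x) + (h (T.p x) : ℝ) := by
          have := dc_parent_step T hh hd x; linarith
      _ ≤ _ := ih (T.p x)

lemma dc_le_of_tips (hh : T.IsHeight h) (hd : T.IsDepth (fun _ => 1) dc) (M : ℕ) : ∀ b : B,
    (∀ t : B, T.IsTip t → T.Descendant t b → h t < M) → dc b ≤ (M : ℝ) - h b := by
  have key : ∀ n (b : B), Fintype.card B - h b ≤ n →
      (∀ t : B, T.IsTip t → T.Descendant t b → h t < M) → dc b ≤ (M : ℝ) - h b := by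
    intro n
    induction n with
    | zero => intro b hb; exact absurd (height_lt_card T hh b) (by omega)
    | succ n ih =>
      intro b hb htips
      by_cases ht : T.succ b = ∅
      · have hself : T.Descendant b b := ⟨0, rfl⟩
        have := htips b ht hself
        rw [(hd b).1 ht]
        simp only
        have : (h b : ℝ) + 1 ≤ M := by exact_mod_cast this
        linarith
      · have hne : (T.succ b).Nonempty := Finset.nonempty_iff_ne_empty.mpr ht
        rw [(hd b).2 hne]
        have hsup : (T.succ b).sup' hne dc ≤ (M : ℝ) - h b - 1 := by
          apply Finset.sup'_le
          intro b₁ hb₁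
          have hh1 : h b₁ = h b + 1 := height_succ T hh hb₁
          have hb1 : dc b₁ ≤ (M : ℝ) - h b₁ := by
            apply ih b₁ (by have := height_lt_card T hh b; omega)
            intro t htip ⟨k, hk⟩
            apply htips t htip
            exact ⟨k + 1, by rw [Function.iterate_succ_apply', hk, (succ_mem T hb₁).2]⟩
          rw [hh1] at hb1
          push_cast at hb1 ⊢
          linarith
        simp only
        linarith
  intro b; exact key (Fintype.card B - h b) b le_rfl

end Aux

/-- If `b'` and `b` are distinct blocks at the same height, every
tip descending from `b'` has height strictly less than `h_max + c*`, and `b`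
has a descendant of height at least `h_max`, then
`d_c b' - d_c b < c*`; in particular `b'` is not `c*`-stable with respect to
the confirmation depth `d_c`. -/
theorem fork_not_cstar_stable
    {B : Type*} [Fintype B] [DecidableEq B] (T : BlockTree B)
    (dc : B → ℝ) (h : B → ℕ)
    (hh : T.IsHeight h) (hd : T.IsDepth (fun _ => 1) dc)
    (cstar : ℕ) (hcstar : 1 ≤ cstar) (hmax : ℕ)
    (b' b : B) (hne : b' ≠ b) (hbb' : h b' = h b)
    (htips : ∀ t : B, T.IsTip t → T.Descendant t b' → h t < hmax + cstar)
    (hdesc : ∃ b'' : B, T.Descendant b'' b ∧ hmax ≤ h b'') :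
    dc b' - dc b < (cstar : ℝ) ∧ ¬ T.Stable dc h (cstar : ℝ) b' := by
  obtain ⟨b'', ⟨k, hk⟩, hb''⟩ := hdesc
  have hup : dc b' ≤ ((hmax + cstar : ℕ) : ℝ) - h b' :=
    dc_le_of_tips T hh hd (hmax + cstar) b' htips
  have hlow : dc b'' + (h b'' : ℝ) ≤ dc b + (h b : ℝ) := by
    have := dc_descendant T hh hd k b''
    rw [hk] at this; exact this
  have h1 : 1 ≤ dc b'' := one_le_dc T hh hd b''
  have hmain : dc b' - dc b < (cstar : ℝ) := by
    have hc : (1 : ℝ) ≤ cstar := by exact_mod_cast hcstar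
    have hbm : (hmax : ℝ) ≤ h b'' := by exact_mod_cast hb''
    have hbb : (h b' : ℝ) = h b := by exact_mod_cast hbb'
    push_cast at hup
    linarith
  refine ⟨hmain, fun hst => ?_⟩
  have := hst.2 b hne.symm hbb'.symm
  linarith
end

section
/- Let B be a finite block tree with height function h and confirmation depth d_c, and let δ > 0 be real. If a block b ∈ B is δ-stable with respect to d_c, then every chain from the genesis block b_g to a tip realizing the maximum total length d_c(b_g) passes through b. In other words, a confirmation-based δ-stable block lies on every longest chain of the tree. -/
/-- If a block `b` is `δ`-stable (`δ > 0`) with respect to the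
confirmation depth `d_c`, then every chain from the genesis block to a tip
whose total length realizes the maximum `d_c (T.g)` passes through `b`. -/
theorem stable_on_every_longest_chain
    {B : Type*} [Fintype B] [DecidableEq B] (T : BlockTree B)
    (dc : B → ℝ) (h : B → ℕ)
    (hh : T.IsHeight h) (hd : T.IsDepth (fun _ => 1) dc)
    (δ : ℝ) (hδ : 0 < δ) (b : B) (hb : T.Stable dc h δ b)
    (k : ℕ) (x : ℕ → B) (hx0 : x 0 = T.g)
    (hsucc : ∀ i < k, x (i + 1) ∈ T.succ (x i)) (htip : T.IsTip (x k))
    (hlen : ((k : ℝ) + 1) = dc T.g) :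
    ∃ i ≤ k, x i = b := by
  -- depth increases by at least 1 going to the parent
  have hchild : ∀ b' : B, b' ≠ T.g → dc b' + 1 ≤ dc (T.p b') := by
    intro b' hne
    have hmem : b' ∈ T.succ (T.p b') := by
      simp [BlockTree.succ, hne]
    have hnonempty : (T.succ (T.p b')).Nonempty := ⟨b', hmem⟩
    have heq := (hd (T.p b')).2 hnonempty
    have hle := Finset.le_sup' dc hmem
    rw [heq]; simp only []; linarith
  have hzero : ∀ b' : B, h b' = 0 → b' = T.g := by
    intro b' h0
    by_contra hne
    have := hh.2 b' hne
    omega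
  -- key bound: dc b' + h b' ≤ dc g
  have hkey : ∀ n : ℕ, ∀ b' : B, h b' = n → dc b' + n ≤ dc T.g := by
    intro n
    induction n with
    | zero => intro b' h0; rw [hzero b' h0]; simp
    | succ n ih =>
      intro b' hn
      have hne : b' ≠ T.g := by intro e; rw [e, hh.1] at hn; omega
      have h1 := hh.2 b' hne
      have h2 := hchild b' hne
      have h3 := ih (T.p b') (by omega)
      push_cast
      linarith
  -- heights along the chain
  have hht : ∀ i, i ≤ k → h (x i) = i := by
    intro i
    induction i with
    | zero => intro _; rw [hx0, hh.1]
    | succ i ih =>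
      intro hik
      have hmem := hsucc i (by omega)
      simp only [BlockTree.succ, Finset.mem_filter, Finset.mem_univ, true_and] at hmem
      have := hh.2 (x (i + 1)) hmem.1
      rw [this, hmem.2, ih (by omega)]
  -- lower bound along the chain: dc (x (k - j)) ≥ j + 1
  have hlow : ∀ j, j ≤ k → ((j : ℝ) + 1) ≤ dc (x (k - j)) := by
    intro j
    induction j with
    | zero =>
      intro _
      have := (hd (x k)).1 htip
      simp only [Nat.sub_zero, this]
      norm_num
    | succ j ih =>
      intro hjk
      have hik : k - (j + 1) < k := by omega
      have hmem := hsucc (k - (j + 1)) hik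
      have hidx : k - (j + 1) + 1 = k - j := by omega
      rw [hidx] at hmem
      have hnonempty : (T.succ (x (k - (j + 1)))).Nonempty := ⟨_, hmem⟩
      have heq := (hd (x (k - (j + 1)))).2 hnonempty
      have hle := Finset.le_sup' dc hmem
      have h3 := ih (by omega)
      rw [heq]
      push_cast
      linarith
  set m := h b with hm
  have hbk : dc b + (m : ℝ) ≤ dc T.g := hkey m b rfl
  have hmk : m ≤ k := by
    by_contra hmk
    have : (k : ℝ) + 1 ≤ (m : ℝ) := by exact_mod_cast Nat.succ_le_of_lt (by omega)
    have := hb.1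
    linarith
  refine ⟨m, hmk, ?_⟩
  by_contra hne
  have hhxm : h (x m) = m := hht m hmk
  have hstab := hb.2 (x m) hne hhxm
  have hlow' := hlow (k - m) (by omega)
  rw [show k - (k - m) = m by omega] at hlow'
  have : ((k : ℝ) - m + 1) ≤ dc (x m) := by
    have : ((k - m : ℕ) : ℝ) = (k : ℝ) - m := by
      push_cast [Nat.cast_sub hmk]; ring
    linarith [this ▸ hlow']
  linarith
end
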